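/- (Ditor) For every integer n > 1, every maximal n-ladder is uncountable. Equivalently, every countable n-ladder (for n > 1) is order-isomorphic to a proper ideal of some n-ladder. -/

import Mathlib

universe u

/-- `P` is an `n`-ladder: a nonempty lower finite lattice in which every element
has at most `n` lower covers. -/
def IsNLadder (P : Type*) [Lattice P] (n : ℕ) : Prop :=
  Nonempty P ∧ (∀ x : P, (Set.Iic x).Finite) ∧ ∀ x : P, {y : P | y ⋖ x}.ncard ≤ n

/-- `P` is a maximal `n`-ladder: an `n`-ladder which is not order-isomorphic to
a proper ideal of any `n`-ladder. -/
def IsMaximalNLadder (P : Type u) [Lattice P] (n : ℕ) : Prop :=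
  IsNLadder P n ∧
    ¬ ∃ (Q : Type u) (_ : Lattice Q) (I : Order.Ideal Q),
        IsNLadder Q n ∧ I.IsProper ∧ Nonempty (P ≃o ↥I)

/-- Data for the ladder extension: a monotone cofinal sequence. -/
structure LSetup (P : Type u) [Lattice P] where
  c : ℕ → P
  mono : Monotone c
  cof : ∀ p : P, ∃ k, p ≤ c k

noncomputable def LSetup.fnd {P : Type u} [Lattice P] (S : LSetup P) (p : P) : ℕ :=
  @Nat.find (fun k => p ≤ S.c k) (Classical.decPred _) (S.cof p)

lemma LSetup.fnd_spec {P : Type u} [Lattice P] (S : LSetup P) (p : P) : p ≤ S.c (S.fnd p) :=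
  @Nat.find_spec (fun k => p ≤ S.c k) (Classical.decPred _) (S.cof p)

lemma LSetup.fnd_min' {P : Type u} [Lattice P] (S : LSetup P) {p : P} {k : ℕ} (h : p ≤ S.c k) :
    S.fnd p ≤ k :=
  @Nat.find_min' (fun k => p ≤ S.c k) (Classical.decPred _) (S.cof p) _ h

/-- The extension of `P` by a new cofinal chain indexed by `ℕ`. -/
def LExt {P : Type u} [Lattice P] (_ : LSetup P) : Type u := P ⊕ ℕ

namespace LExt

variable {P : Type u} [Lattice P] {S : LSetup P}

def inl (S : LSetup P) (p : P) : LExt S := Sum.inl p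
def inr (S : LSetup P) (i : ℕ) : LExt S := Sum.inr i

noncomputable instance : Lattice (LExt S) where
  le x y := match x, y with
    | Sum.inl p, Sum.inl q => p ≤ q
    | Sum.inl p, Sum.inr j => p ≤ S.c j
    | Sum.inr _, Sum.inl _ => False
    | Sum.inr i, Sum.inr j => i ≤ j
  le_refl x := by cases x <;> simp
  le_trans x y z hxy hyz := by
    cases x <;> cases y <;> cases z <;> simp_all
    · exact le_trans hxy hyz
    · exact le_trans hxy hyz
    · exact le_trans hxy (S.mono hyz)
    · exact le_trans hxy hyz
  le_antisymm x y hxy hyx := by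
    cases x <;> cases y <;> simp_all
    · exact congrArg Sum.inl (le_antisymm hxy hyx)
    · exact congrArg Sum.inr (le_antisymm hxy hyx)
  sup x y := match x, y with
    | Sum.inl p, Sum.inl q => Sum.inl (p ⊔ q)
    | Sum.inl p, Sum.inr j => Sum.inr (max (S.fnd p) j)
    | Sum.inr i, Sum.inl q => Sum.inr (max i (S.fnd q))
    | Sum.inr i, Sum.inr j => Sum.inr (max i j)
  le_sup_left x y := by
    cases x <;> cases y <;> simp
    exact le_trans (S.fnd_spec _) (S.mono (le_max_left _ _))
  le_sup_right x y := by
    cases x <;> cases y <;> simp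
    exact le_trans (S.fnd_spec _) (S.mono (le_max_right _ _))
  sup_le x y z hxz hyz := by
    cases x <;> cases y <;> cases z <;> simp_all
    all_goals first
      | exact S.fnd_min' hxz
      | exact S.fnd_min' hyz
  inf x y := match x, y with
    | Sum.inl p, Sum.inl q => Sum.inl (p ⊓ q)
    | Sum.inl p, Sum.inr j => Sum.inl (p ⊓ S.c j)
    | Sum.inr i, Sum.inl q => Sum.inl (q ⊓ S.c i)
    | Sum.inr i, Sum.inr j => Sum.inr (min i j)
  inf_le_left x y := by cases x <;> cases y <;> simp
  inf_le_right x y := by cases x <;> cases y <;> simp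
  le_inf x y z hxy hxz := by
    cases x <;> cases y <;> cases z <;> simp_all
    rename_i p i j
    rcases min_choice i j with hm | hm <;> rw [hm] <;> assumption

@[simp] lemma inl_le_inl_iff {p q : P} : inl S p ≤ inl S q ↔ p ≤ q := Iff.rfl
@[simp] lemma inl_le_inr_iff {p : P} {i : ℕ} : inl S p ≤ inr S i ↔ p ≤ S.c i := Iff.rfl
@[simp] lemma not_inr_le_inl {p : P} {i : ℕ} : ¬ inr S i ≤ inl S p := fun h => h
@[simp] lemma inr_le_inr_iff {i j : ℕ} : inr S i ≤ inr S j ↔ i ≤ j := Iff.rfl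

lemma inl_injective : Function.Injective (inl S) := fun _ _ h => Sum.inl.inj h

lemma cases' (x : LExt S) : (∃ p, x = inl S p) ∨ ∃ i, x = inr S i := by
  rcases (x : P ⊕ ℕ) with p | i
  exacts [Or.inl ⟨p, rfl⟩, Or.inr ⟨i, rfl⟩]

@[simp] lemma inl_lt_inl_iff {p q : P} : inl S p < inl S q ↔ p < q := by
  simp [lt_iff_le_not_ge]

@[simp] lemma inr_lt_inr_iff {i j : ℕ} : inr S i < inr S j ↔ i < j := by
  rw [lt_iff_le_not_ge, Nat.lt_iff_le_not_le, inr_le_inr_iff, inr_le_inr_iff]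

@[simp] lemma not_inr_lt_inl {p : P} {i : ℕ} : ¬ inr S i < inl S p :=
  fun h => not_inr_le_inl h.le

@[simp] lemma inl_lt_inr_iff {p : P} {i : ℕ} : inl S p < inr S i ↔ p ≤ S.c i := by
  constructor
  · exact fun h => h.le
  · intro h
    exact lt_of_le_not_ge h (not_inr_le_inl)

@[simp] lemma inl_ne_inr {p : P} {i : ℕ} : inl S p ≠ inr S i := fun h => by
  exact Sum.inl_ne_inr h

lemma iic_inl (p : P) : Set.Iic (inl S p) = inl S '' Set.Iic p := by
  ext x
  rcases cases' x with ⟨q, rfl⟩ | ⟨i, rfl⟩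
  · simp only [Set.mem_Iic, inl_le_inl_iff, Set.mem_image]
    exact ⟨fun h => ⟨q, h, rfl⟩, fun ⟨r, hr, he⟩ => inl_injective he ▸ hr⟩
  · simp only [Set.mem_Iic, Set.mem_image]
    constructor
    · exact fun h => absurd h not_inr_le_inl
    · rintro ⟨r, _, he⟩
      exact absurd he inl_ne_inr

lemma iic_inr (i : ℕ) :
    Set.Iic (inr S i) = inl S '' Set.Iic (S.c i) ∪ inr S '' Set.Iic i := by
  ext x
  rcases cases' x with ⟨q, rfl⟩ | ⟨j, rfl⟩
  · simp only [Set.mem_Iic, inl_le_inr_iff, Set.mem_union, Set.mem_image]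
    constructor
    · exact fun h => Or.inl ⟨q, h, rfl⟩
    · rintro (⟨r, hr, he⟩ | ⟨r, _, he⟩)
      · exact inl_injective he ▸ hr
      · exact absurd he.symm inl_ne_inr
  · simp only [Set.mem_Iic, inr_le_inr_iff, Set.mem_union, Set.mem_image]
    constructor
    · exact fun h => Or.inr ⟨j, h, rfl⟩
    · rintro (⟨r, _, he⟩ | ⟨r, hr, he⟩)
      · exact absurd he inl_ne_inr
      · cases Sum.inr.inj he; exact hr

lemma covers_inl (p : P) : {y : LExt S | y ⋖ inl S p} = inl S '' {q : P | q ⋖ p} := by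
  ext x
  rcases cases' x with ⟨q, rfl⟩ | ⟨i, rfl⟩
  · simp only [Set.mem_setOf_eq, Set.mem_image]
    constructor
    · intro h
      refine ⟨q, ⟨inl_lt_inl_iff.1 h.1, fun r hqr hrp => ?_⟩, rfl⟩
      exact h.2 (inl_lt_inl_iff.2 hqr) (inl_lt_inl_iff.2 hrp)
    · rintro ⟨r, hr, he⟩
      cases inl_injective he
      refine ⟨inl_lt_inl_iff.2 hr.1, fun z hz1 hz2 => ?_⟩
      rcases cases' z with ⟨s, rfl⟩ | ⟨j, rfl⟩
      · exact hr.2 (inl_lt_inl_iff.1 hz1) (inl_lt_inl_iff.1 hz2)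
      · exact not_inr_lt_inl hz2
  · simp only [Set.mem_setOf_eq, Set.mem_image]
    constructor
    · intro h
      exact absurd h.1 not_inr_lt_inl
    · rintro ⟨r, _, he⟩
      exact absurd he inl_ne_inr

lemma covers_inr_subset (i : ℕ) :
    {y : LExt S | y ⋖ inr S i} ⊆ {inl S (S.c i), inr S (i - 1)} := by
  intro y hy
  rcases cases' y with ⟨p, rfl⟩ | ⟨j, rfl⟩
  · left
    have hle : p ≤ S.c i := inl_lt_inr_iff.1 hy.1
    rcases eq_or_lt_of_le hle with he | hlt
    · exact congrArg (inl S) he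
    · exact absurd (hy.2 (inl_lt_inl_iff.2 hlt) (inl_lt_inr_iff.2 le_rfl)) (fun h => h)
  · right
    have hj : j < i := inr_lt_inr_iff.1 hy.1
    have : j = i - 1 := by
      by_contra hne
      have h1 : j + 1 < i := by omega
      exact hy.2 (inr_lt_inr_iff.2 (Nat.lt_succ_self j)) (inr_lt_inr_iff.2 h1)
    rw [this]
    exact Set.mem_singleton _

end LExt

theorem not_maximal_of_countable {P : Type u} [Lattice P] (n : ℕ) (hn : 1 < n)
    (hlad : IsNLadder P n) [Countable P] : ¬ IsMaximalNLadder P n := by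
  intro ⟨_, hmax⟩
  apply hmax
  obtain ⟨⟨x0⟩, hfin, hcov⟩ := hlad
  haveI : Nonempty P := ⟨x0⟩
  obtain ⟨e, he⟩ := exists_surjective_nat P
  -- the cofinal monotone sequence
  let c : ℕ → P := fun k => Nat.rec (e 0) (fun k ck => ck ⊔ e (k + 1)) k
  have hmono : Monotone c := monotone_nat_of_le_succ fun k => le_sup_left
  have hec : ∀ k, e k ≤ c k := by
    intro k
    cases k with
    | zero => exact le_rfl
    | succ k => exact le_sup_right
  have hcof : ∀ p : P, ∃ k, p ≤ c k := by
    intro p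
    obtain ⟨k, rfl⟩ := he p
    exact ⟨k, hec k⟩
  set S : LSetup P := ⟨c, hmono, hcof⟩ with hS
  let I : Order.Ideal (LExt S) :=
    { carrier := Set.range (LExt.inl S)
      lower' := by
        intro x y hle hx
        rcases LExt.cases' y with ⟨q, rfl⟩ | ⟨i, rfl⟩
        · exact ⟨q, rfl⟩
        · obtain ⟨p, rfl⟩ := hx
          exact absurd hle LExt.not_inr_le_inl
      nonempty' := ⟨LExt.inl S x0, x0, rfl⟩
      directed' := by
        rintro _ ⟨p, rfl⟩ _ ⟨q, rfl⟩
        refine ⟨LExt.inl S (p ⊔ q), ⟨p ⊔ q, rfl⟩, ?_, ?_⟩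
        · exact LExt.inl_le_inl_iff.2 le_sup_left
        · exact LExt.inl_le_inl_iff.2 le_sup_right }
  have memI : ∀ x : LExt S, x ∈ I ↔ ∃ p, LExt.inl S p = x := fun _ => Iff.rfl
  refine ⟨LExt S, inferInstance, I, ?_, ?_, ?_⟩
  · refine ⟨⟨LExt.inr S 0⟩, ?_, ?_⟩
    · intro x
      rcases LExt.cases' x with ⟨p, rfl⟩ | ⟨i, rfl⟩
      · rw [LExt.iic_inl]
        exact (hfin p).image _
      · rw [LExt.iic_inr]
        exact ((hfin (S.c i)).image _).union ((Set.finite_Iic i).image _)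
    · intro x
      rcases LExt.cases' x with ⟨p, rfl⟩ | ⟨i, rfl⟩
      · rw [LExt.covers_inl, Set.ncard_image_of_injective _ LExt.inl_injective]
        exact hcov p
      · refine le_trans (Set.ncard_le_ncard (LExt.covers_inr_subset i) ?_) ?_
        · exact (Set.finite_singleton _).insert _
        · calc ({LExt.inl S (S.c i), LExt.inr S (i - 1)} : Set (LExt S)).ncard
              ≤ ({LExt.inr S (i - 1)} : Set (LExt S)).ncard + 1 := Set.ncard_insert_le _ _
            _ ≤ n := by rw [Set.ncard_singleton]; omega
  · refine Order.Ideal.isProper_of_notMem (p := LExt.inr S 0) ?_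
    rintro ⟨p, hp⟩
    exact LExt.inl_ne_inr hp
  · refine ⟨⟨⟨fun p => ⟨LExt.inl S p, p, rfl⟩,
      fun x => Classical.choose ((memI x.1).1 x.2), ?_, ?_⟩, ?_⟩⟩
    · intro p
      exact LExt.inl_injective (Classical.choose_spec ((memI _).1 ⟨p, rfl⟩))
    · intro x
      exact Subtype.ext (Classical.choose_spec ((memI x.1).1 x.2))
    · intro a b
      exact Iff.trans Subtype.mk_le_mk LExt.inl_le_inl_iff

/-- Ditor: for every `n > 1`, every maximal `n`-ladder is
uncountable. -/
theorem maximal_ladder_uncountable {P : Type u} [Lattice P] (n : ℕ) (hn : 1 < n)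
    (h : IsMaximalNLadder P n) : Uncountable P := by
  by_contra hc
  rw [not_uncountable_iff] at hc
  exact not_maximal_of_countable n hn h.1 h
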